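/- Let E (cells) and K (commodities) be finite types, T > 0, d i k : ℝ → ℝ concave on [0,∞) for each i ∈ E, k ∈ K, s i : ℝ → ℝ concave on [0,∞) for each i ∈ E, w i k > 0 weights, R : ℝ → E → E → K → ℝ nonnegative turning ratios, and λ : ℝ → E → K → ℝ exogenous inflows. Consider the set T of triples of functions (x, z, f) with x : ℝ → E → K → ℝ, z : ℝ → E → K → ℝ, f : ℝ → E → E → K → ℝ such that for every t ∈ [0, T], i ∈ E, j ∈ E, k ∈ K: the map t ↦ x t i k has derivative λ t i k + Σ_{j' ∈ E} f t j' i k − z t i k at t; 0 ≤ x t i k; 0 ≤ z t i k ≤ d i k (x t i k); Σ_{k ∈ K} Σ_{j' ∈ E} f t j' i k ≤ s i (Σ_{k ∈ K} w i k · x t i k); f t i j k = R t i j k · z t i k; and f t i j k ≥ 0. Then T is a convex subset of the product function space: if (x⁰, z⁰, f⁰) and (x¹, z¹, f¹) belong to T and β ∈ [0,1], then ((1−β)x⁰+βx¹, (1−β)z⁰+βz¹, (1−β)f⁰+βf¹) belongs to T. -/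

import Mathlib

/-- The feasible set of the continuous-time relaxed MC-FNC problem (trajectories
`(x, z, f)` satisfying the mass-conservation ODE, nonnegativity, demand
constraints with `d i k` concave on `[0, ∞)`, aggregate supply constraints with
`s i` concave on `[0, ∞)` and positive weights, and routing equalities) is a
convex subset of the product function space, i.e. convex combinations
`((1-β)x⁰+βx¹, (1-β)z⁰+βz¹, (1-β)f⁰+βf¹)` of feasible triples are feasible. -/
theorem continuous_relaxed_feasible_set_convex
    (E K : Type*) [Fintype E] [Fintype K]
    (T : ℝ) (hT : 0 < T)
    (d : E → K → ℝ → ℝ)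
    (hd : ∀ i k, ConcaveOn ℝ (Set.Ici (0 : ℝ)) (d i k))
    (s : E → ℝ → ℝ)
    (hs : ∀ i, ConcaveOn ℝ (Set.Ici (0 : ℝ)) (s i))
    (w : E → K → ℝ) (hw : ∀ i k, 0 < w i k)
    (R : ℝ → E → E → K → ℝ) (hR : ∀ t i j k, 0 ≤ R t i j k)
    (lam : ℝ → E → K → ℝ) :
    Convex ℝ {p : (ℝ → E → K → ℝ) × (ℝ → E → K → ℝ) × (ℝ → E → E → K → ℝ) |
      ∀ t ∈ Set.Icc (0 : ℝ) T, ∀ i j k,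
        HasDerivAt (fun u => p.1 u i k)
          (lam t i k + (∑ j', p.2.2 t j' i k) - p.2.1 t i k) t ∧
        0 ≤ p.1 t i k ∧
        (0 ≤ p.2.1 t i k ∧ p.2.1 t i k ≤ d i k (p.1 t i k)) ∧
        (∑ k', ∑ j', p.2.2 t j' i k') ≤ s i (∑ k', w i k' * p.1 t i k') ∧
        p.2.2 t i j k = R t i j k * p.2.1 t i k ∧
        0 ≤ p.2.2 t i j k} := by
  rintro ⟨x0, z0, f0⟩ h0 ⟨x1, z1, f1⟩ h1 a b ha hb hab t ht i j k
  obtain ⟨hD0, hx0, ⟨hz0, hzd0⟩, hsup0, hrt0, hf0⟩ := h0 t ht i j k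
  obtain ⟨hD1, hx1, ⟨hz1, hzd1⟩, hsup1, hrt1, hf1⟩ := h1 t ht i j k
  simp only [Set.mem_setOf_eq, Prod.fst_add, Prod.snd_add, Prod.smul_fst, Prod.smul_snd,
    Pi.add_apply, Pi.smul_apply, smul_eq_mul]
  have hx0' : ∀ k', 0 ≤ x0 t i k' := fun k' => (h0 t ht i j k').2.1
  have hx1' : ∀ k', 0 ≤ x1 t i k' := fun k' => (h1 t ht i j k').2.1
  refine ⟨?_, ?_, ⟨?_, ?_⟩, ?_, ?_, ?_⟩
  · have hD := (hD0.const_mul a).add (hD1.const_mul b)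
    have harg : ∑ j', (a * f0 t j' i k + b * f1 t j' i k)
        = a * ∑ j', f0 t j' i k + b * ∑ j', f1 t j' i k := by
      rw [Finset.mul_sum, Finset.mul_sum, ← Finset.sum_add_distrib]
    refine hD.congr_deriv ?_
    rw [harg]
    have : lam t i k = (a + b) * lam t i k := by rw [hab, one_mul]
    nlinarith [this]
  · positivity
  · positivity
  · have hkey := (hd i k).2 (Set.mem_Ici.mpr hx0) (Set.mem_Ici.mpr hx1) ha hb hab
    simp only [smul_eq_mul] at hkey
    calc a * z0 t i k + b * z1 t i k
        ≤ a * d i k (x0 t i k) + b * d i k (x1 t i k) := by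
          gcongr <;> assumption
      _ ≤ d i k (a * x0 t i k + b * x1 t i k) := hkey
  · have harg : ∑ k', w i k' * (a * x0 t i k' + b * x1 t i k')
        = a * ∑ k', w i k' * x0 t i k' + b * ∑ k', w i k' * x1 t i k' := by
      rw [Finset.mul_sum, Finset.mul_sum, ← Finset.sum_add_distrib]
      exact Finset.sum_congr rfl fun k' _ => by ring
    have hm0 : (0:ℝ) ≤ ∑ k', w i k' * x0 t i k' :=
      Finset.sum_nonneg fun k' _ => mul_nonneg (hw i k').le (hx0' k')
    have hm1 : (0:ℝ) ≤ ∑ k', w i k' * x1 t i k' :=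
      Finset.sum_nonneg fun k' _ => mul_nonneg (hw i k').le (hx1' k')
    have hkey := (hs i).2 (Set.mem_Ici.mpr hm0) (Set.mem_Ici.mpr hm1) ha hb hab
    simp only [smul_eq_mul] at hkey
    have hlhs : ∑ k', ∑ j', (a * f0 t j' i k' + b * f1 t j' i k')
        = a * (∑ k', ∑ j', f0 t j' i k') + b * (∑ k', ∑ j', f1 t j' i k') := by
      simp only [Finset.mul_sum, ← Finset.sum_add_distrib]
    rw [harg, hlhs]
    calc a * (∑ k', ∑ j', f0 t j' i k') + b * (∑ k', ∑ j', f1 t j' i k')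
        ≤ a * s i (∑ k', w i k' * x0 t i k') + b * s i (∑ k', w i k' * x1 t i k') := by
          gcongr <;> assumption
      _ ≤ _ := hkey
  · dsimp only at hrt0 hrt1
    rw [hrt0, hrt1]; ring
  · have := mul_nonneg (mul_nonneg ha hz0) (hR t i j k)
    have h0' : 0 ≤ a * f0 t i j k := mul_nonneg ha hf0
    have h1' : 0 ≤ b * f1 t i j k := mul_nonneg hb hf1
    linarith
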